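/- arXiv:1211.2980 — 2 statements merged into one kernel-verified Lean document; each statement's English description precedes it below -/
import Mathlib

section
/- For a finite set system S ⊆ {0,1}^X, the following are equivalent: (1) sstr(S) = str(S); (2) |sstr(S)| = |S|; (3) |S| = |str(S)|. -/
open Finset

variable {α : Type*} [Fintype α] [DecidableEq α]

/-- `S` shatters `Y`: every assignment on `Y` extends to a member of `S`. -/
def shatters (S : Finset (α → Bool)) (Y : Finset α) : Prop :=
  ∀ f : α → Bool, ∃ s ∈ S, ∀ a ∈ Y, s a = f a

/-- `S` strongly shatters `Y`: some assignment off `Y` has all its `Y`-extensions in `S`. -/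
def stronglyShatters (S : Finset (α → Bool)) (Y : Finset α) : Prop :=
  ∃ g : α → Bool, ∀ f : α → Bool, (fun a => if a ∈ Y then f a else g a) ∈ S

open Classical in
/-- The family of shattered subsets. -/
noncomputable def strF (S : Finset (α → Bool)) : Finset (Finset α) :=
  Finset.univ.filter (fun Y => shatters S Y)

open Classical in
/-- The family of strongly shattered subsets. -/
noncomputable def sstrF (S : Finset (α → Bool)) : Finset (Finset α) :=
  Finset.univ.filter (fun Y => stronglyShatters S Y)

/-- Shattering-extremal: shattered = strongly shattered. -/
def SE (S : Finset (α → Bool)) : Prop :=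
  ∀ Y : Finset α, shatters S Y ↔ stronglyShatters S Y

lemma ssh_imp_sh {S : Finset (α → Bool)} {Y : Finset α}
    (h : stronglyShatters S Y) : shatters S Y := by
  obtain ⟨g, hg⟩ := h
  intro f
  exact ⟨_, hg f, fun a ha => by simp [ha]⟩

lemma sh_mono {S T : Finset (α → Bool)} {Y : Finset α} (hST : S ⊆ T)
    (h : shatters S Y) : shatters T Y := by
  intro f; obtain ⟨s, hs, ha⟩ := h f; exact ⟨s, hST hs, ha⟩

lemma ssh_mono {S T : Finset (α → Bool)} {Y : Finset α} (hST : S ⊆ T)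
    (h : stronglyShatters S Y) : stronglyShatters T Y := by
  obtain ⟨g, hg⟩ := h; exact ⟨g, fun f => hST (hg f)⟩

open Classical in
noncomputable def strR (E : Finset α) (S : Finset (α → Bool)) : Finset (Finset α) :=
  E.powerset.filter (fun Y => shatters S Y)

open Classical in
noncomputable def sstrR (E : Finset α) (S : Finset (α → Bool)) : Finset (Finset α) :=
  E.powerset.filter (fun Y => stronglyShatters S Y)

def supp (E : Finset α) (S : Finset (α → Bool)) : Prop :=
  ∀ s ∈ S, ∀ a, a ∉ E → s a = false

noncomputable def P0 (x : α) (S : Finset (α → Bool)) : Finset (α → Bool) :=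
  S.filter (fun s => s x = false)

noncomputable def P1 (x : α) (S : Finset (α → Bool)) : Finset (α → Bool) :=
  (S.filter (fun s => s x = true)).image (fun s => Function.update s x false)

lemma P0P1_card (x : α) (S : Finset (α → Bool)) :
    (P0 x S).card + (P1 x S).card = S.card := by
  have h1 : (P1 x S).card = (S.filter (fun s => s x = true)).card := by
    apply Finset.card_image_of_injOn
    intro s hs t ht hst
    simp only [mem_coe, mem_filter] at hs ht
    funext a
    by_cases hax : a = x
    · subst hax; rw [hs.2, ht.2]
    · have h : Function.update s x false a = Function.update t x false a := congrFun hst a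
      rwa [Function.update_of_ne hax, Function.update_of_ne hax] at h
  rw [h1]
  have := Finset.card_filter_add_card_filter_not (s := S)
    (p := fun s => s x = false)
  have h2 : S.filter (fun s => ¬ s x = false) = S.filter (fun s => s x = true) := by
    apply Finset.filter_congr; intro s _; simp
  rw [← this, h2]; rfl

lemma supp_P0 {E : Finset α} {x : α} {S : Finset (α → Bool)}
    (h : supp (insert x E) S) : supp E (P0 x S) := by
  intro s hs a ha
  rw [P0, mem_filter] at hs
  by_cases hax : a = x
  · subst hax; exact hs.2
  · exact h s hs.1 a (by simp [hax, ha])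

lemma supp_P1 {E : Finset α} {x : α} {S : Finset (α → Bool)}
    (h : supp (insert x E) S) : supp E (P1 x S) := by
  intro s hs a ha
  rw [P1, mem_image] at hs
  obtain ⟨t, ht, rfl⟩ := hs
  rw [mem_filter] at ht
  by_cases hax : a = x
  · subst hax; simp
  · rw [Function.update_of_ne hax]
    exact h t ht.1 a (by simp [hax, ha])

/-- L3 -/
lemma sh_split {x : α} {S : Finset (α → Bool)} {Y : Finset α} (hxY : x ∉ Y) :
    shatters S Y ↔ shatters (P0 x S ∪ P1 x S) Y := by
  constructor
  · intro h f
    obtain ⟨s, hs, hag⟩ := h f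
    cases hsx : s x with
    | false =>
      exact ⟨s, mem_union_left _ (mem_filter.2 ⟨hs, hsx⟩), hag⟩
    | true =>
      refine ⟨Function.update s x false, mem_union_right _ ?_, ?_⟩
      · exact mem_image.2 ⟨s, mem_filter.2 ⟨hs, hsx⟩, rfl⟩
      · intro a ha
        rw [Function.update_of_ne (fun h : _ = x => hxY (h ▸ ha))]
        exact hag a ha
  · intro h f
    obtain ⟨s, hs, hag⟩ := h f
    rcases mem_union.1 hs with hs0 | hs1
    · exact ⟨s, (mem_filter.1 hs0).1, hag⟩
    · obtain ⟨t, ht, rfl⟩ := mem_image.1 hs1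
      refine ⟨t, (mem_filter.1 ht).1, fun a ha => ?_⟩
      rw [← hag a ha, Function.update_of_ne (fun h : _ = x => hxY (h ▸ ha))]

/-- L4 -/
lemma sh_insert {x : α} {S : Finset (α → Bool)} {Y : Finset α} (hxY : x ∉ Y) :
    shatters S (insert x Y) ↔ (shatters (P0 x S) Y ∧ shatters (P1 x S) Y) := by
  constructor
  · intro h
    constructor
    · intro f
      obtain ⟨s, hs, hag⟩ := h (Function.update f x false)
      have hsx : s x = false := by
        have := hag x (mem_insert_self x Y); rwa [Function.update_self] at this
      refine ⟨s, mem_filter.2 ⟨hs, hsx⟩, fun a ha => ?_⟩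
      have hax : a ≠ x := fun h => hxY (h ▸ ha)
      have := hag a (mem_insert_of_mem ha)
      rwa [Function.update_of_ne hax] at this
    · intro f
      obtain ⟨s, hs, hag⟩ := h (Function.update f x true)
      have hsx : s x = true := by
        have := hag x (mem_insert_self x Y); rwa [Function.update_self] at this
      refine ⟨Function.update s x false, mem_image.2 ⟨s, mem_filter.2 ⟨hs, hsx⟩, rfl⟩,
        fun a ha => ?_⟩
      have hax : a ≠ x := fun h => hxY (h ▸ ha)
      rw [Function.update_of_ne hax]
      have := hag a (mem_insert_of_mem ha)
      rwa [Function.update_of_ne hax] at this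
  · rintro ⟨h0, h1⟩ f
    cases hfx : f x with
    | false =>
      obtain ⟨s, hs, hag⟩ := h0 f
      rw [P0, mem_filter] at hs
      refine ⟨s, hs.1, fun a ha => ?_⟩
      rcases mem_insert.1 ha with rfl | ha'
      · rw [hs.2, hfx]
      · exact hag a ha'
    | true =>
      obtain ⟨s, hs, hag⟩ := h1 f
      rw [P1, mem_image] at hs
      obtain ⟨t, ht, rfl⟩ := hs
      rw [mem_filter] at ht
      refine ⟨t, ht.1, fun a ha => ?_⟩
      rcases mem_insert.1 ha with rfl | ha'
      · rw [ht.2, hfx]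
      · rw [← hag a ha', Function.update_of_ne (fun h : _ = x => hxY (h ▸ ha'))]

/-- L5 -/
lemma ssh_split {x : α} {S : Finset (α → Bool)} {Y : Finset α} (hxY : x ∉ Y) :
    stronglyShatters S Y ↔
      (stronglyShatters (P0 x S) Y ∨ stronglyShatters (P1 x S) Y) := by
  constructor
  · rintro ⟨g, hg⟩
    cases hgx : g x with
    | false =>
      left
      refine ⟨g, fun f => mem_filter.2 ⟨hg f, ?_⟩⟩
      simp [hxY, hgx]
    | true =>
      right
      refine ⟨Function.update g x false, fun f => ?_⟩
      have heq : (fun a => if a ∈ Y then f a else Function.update g x false a)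
          = Function.update (fun a => if a ∈ Y then f a else g a) x false := by
        funext a
        by_cases hax : a = x
        · subst hax; simp [hxY]
        · rw [Function.update_of_ne hax, Function.update_of_ne hax]
      rw [heq]
      exact mem_image.2 ⟨_, mem_filter.2 ⟨hg f, by simp [hxY, hgx]⟩, rfl⟩
  · rintro (⟨g, hg⟩ | ⟨g, hg⟩)
    · exact ⟨g, fun f => (mem_filter.1 (hg f)).1⟩
    · refine ⟨Function.update g x true, fun f => ?_⟩
      obtain ⟨t, ht, heq⟩ := mem_image.1 (hg f)
      rw [mem_filter] at ht
      have hfin : (fun a => if a ∈ Y then f a else Function.update g x true a) = t := by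
        funext a
        by_cases hax : a = x
        · subst hax; simp [hxY, ht.2]
        · have := congrFun heq a
          rw [Function.update_of_ne hax] at this ⊢
          rw [← this]
      rw [hfin]
      exact ht.1

/-- L6 -/
lemma ssh_insert {x : α} {S : Finset (α → Bool)} {Y : Finset α} (hxY : x ∉ Y) :
    stronglyShatters S (insert x Y) ↔ stronglyShatters (P0 x S ∩ P1 x S) Y := by
  constructor
  · rintro ⟨g, hg⟩
    refine ⟨Function.update g x false, fun f => mem_inter.2 ⟨?_, ?_⟩⟩
    · refine mem_filter.2 ⟨?_, by simp [hxY]⟩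
      have heq : (fun a => if a ∈ Y then f a else Function.update g x false a)
          = (fun a => if a ∈ insert x Y then Function.update f x false a else g a) := by
        funext a
        by_cases hax : a = x
        · subst hax; simp [hxY]
        · rw [Function.update_of_ne hax, Function.update_of_ne hax]
          simp [mem_insert, hax]
      rw [heq]
      exact hg _
    · have hmem := hg (Function.update f x true)
      have hx1 : (fun a => if a ∈ insert x Y then Function.update f x true a else g a) x
          = true := by simp
      refine mem_image.2 ⟨_, mem_filter.2 ⟨hmem, hx1⟩, ?_⟩
      funext a
      by_cases hax : a = x
      · subst hax; simp [hxY]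
      · rw [Function.update_of_ne hax, Function.update_of_ne hax]
        simp only [mem_insert, hax, false_or]
        by_cases haY : a ∈ Y
        · simp [haY, Function.update_of_ne hax]
        · simp [haY, Function.update_of_ne hax]
  · rintro ⟨g, hg⟩
    have hgx : g x = false := by
      have h0 := mem_filter.1 (mem_inter.1 (hg (fun _ => false))).1
      have := h0.2
      simpa [hxY] using this
    refine ⟨g, fun f => ?_⟩
    cases hfx : f x with
    | false =>
      have heq : (fun a => if a ∈ insert x Y then f a else g a)
          = (fun a => if a ∈ Y then f a else g a) := by
        funext a
        by_cases hax : a = x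
        · subst hax; simp [hxY, hfx, hgx]
        · simp [mem_insert, hax]
      rw [heq]
      exact (mem_filter.1 (mem_inter.1 (hg f)).1).1
    | true =>
      have h1 := (mem_inter.1 (hg f)).2
      obtain ⟨t, ht, heq⟩ := mem_image.1 h1
      rw [mem_filter] at ht
      have hfin : (fun a => if a ∈ insert x Y then f a else g a) = t := by
        funext a
        by_cases hax : a = x
        · subst hax; simp [hfx, ht.2]
        · have := congrFun heq a
          rw [Function.update_of_ne hax] at this
          simp only [mem_insert, hax, false_or]
          rw [← this]
      rw [hfin]
      exact ht.1

open Classical in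
lemma decomp_card {x : α} {E : Finset α} (hx : x ∉ E) (p : Finset α → Prop) :
    ((insert x E).powerset.filter p).card
      = (E.powerset.filter p).card + (E.powerset.filter (fun Y => p (insert x Y))).card := by
  rw [Finset.powerset_insert, Finset.filter_union]
  rw [Finset.card_union_of_disjoint]
  · congr 1
    rw [Finset.filter_image]
    rw [Finset.card_image_of_injOn]
    intro Y hY Z hZ hYZ
    simp only [coe_filter, Set.mem_setOf_eq, mem_powerset] at hY hZ
    have hxy : x ∉ Y := fun h => hx (hY.1 h)
    have hxz : x ∉ Z := fun h => hx (hZ.1 h)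
    ext a
    constructor
    · intro ha
      have : a ∈ insert x Z := hYZ ▸ mem_insert_of_mem ha
      rcases mem_insert.1 this with rfl | h
      · exact absurd ha hxy
      · exact h
    · intro ha
      have : a ∈ insert x Y := hYZ.symm ▸ mem_insert_of_mem ha
      rcases mem_insert.1 this with rfl | h
      · exact absurd ha hxz
      · exact h
  · rw [Finset.disjoint_left]
    intro Y hY hY'
    have h1 : Y ⊆ E := mem_powerset.1 (mem_of_mem_filter _ hY)
    have h2 := mem_of_mem_filter _ hY'
    rw [mem_image] at h2
    obtain ⟨Z, _, rfl⟩ := h2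
    exact hx (h1 (mem_insert_self x Z))

open Classical in
lemma filter_ie {β : Type*} [DecidableEq β] (s : Finset β) (p q : β → Prop) :
    (s.filter (fun y => p y ∨ q y)).card + (s.filter (fun y => p y ∧ q y)).card
      = (s.filter p).card + (s.filter q).card := by
  rw [Finset.filter_or, Finset.filter_and, Finset.card_union_add_card_inter]

open Classical in
theorem main_ind (E : Finset α) : ∀ S : Finset (α → Bool), supp E S →
    ((sstrR E S).card ≤ S.card ∧ S.card ≤ (strR E S).card) ∧
    ((sstrR E S).card = S.card → ∀ Y ∈ E.powerset, shatters S Y → stronglyShatters S Y) ∧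
    (S.card = (strR E S).card → ∀ Y ∈ E.powerset, shatters S Y → stronglyShatters S Y) := by
  induction E using Finset.induction_on with
  | empty =>
    intro S hsupp
    by_cases hS : S = ∅
    · subst hS
      have hsh : ∀ Y : Finset α, ¬ shatters (∅ : Finset (α → Bool)) Y := by
        intro Y h
        obtain ⟨s, hs, -⟩ := h (fun _ => false)
        exact absurd hs (notMem_empty s)
      have h1 : strR (∅ : Finset α) (∅ : Finset (α → Bool)) = ∅ :=
        Finset.filter_false_of_mem (fun Y _ => hsh Y)
      have h2 : sstrR (∅ : Finset α) (∅ : Finset (α → Bool)) = ∅ :=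
        Finset.filter_false_of_mem (fun Y _ h => hsh Y (ssh_imp_sh h))
      refine ⟨⟨by simp [h2], by simp [h1]⟩, ?_, ?_⟩ <;>
        exact fun _ Y _ h => absurd h (hsh Y)
    · obtain ⟨s0, hs0⟩ := Finset.nonempty_iff_ne_empty.2 hS
      have hconst : ∀ s ∈ S, s = (fun _ => false) := by
        intro s hs; funext a; exact hsupp s hs a (notMem_empty a)
      have hmem : (fun _ : α => false) ∈ S := hconst s0 hs0 ▸ hs0
      have hssh : stronglyShatters S ∅ := by
        refine ⟨fun _ => false, fun f => ?_⟩
        have heq : (fun a => if a ∈ (∅ : Finset α) then f a else false)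
            = (fun _ : α => false) := by funext a; simp
        rw [heq]; exact hmem
      have hcardS : S.card = 1 := by
        rw [Finset.eq_singleton_iff_unique_mem.2 ⟨hmem, hconst⟩, card_singleton]
      have hstr1 : strR (∅ : Finset α) S = {∅} := by
        rw [strR, Finset.powerset_empty]
        exact Finset.filter_true_of_mem (by
          intro Y hY
          rw [Finset.mem_singleton] at hY
          subst hY
          exact ssh_imp_sh hssh)
      have hsstr1 : sstrR (∅ : Finset α) S = {∅} := by
        rw [sstrR, Finset.powerset_empty]
        exact Finset.filter_true_of_mem (by
          intro Y hY
          rw [Finset.mem_singleton] at hY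
          subst hY
          exact hssh)
      have hY0 : ∀ Y ∈ (∅ : Finset α).powerset, Y = ∅ := by
        intro Y hY
        exact Finset.subset_empty.1 (mem_powerset.1 hY)
      refine ⟨⟨by simp [hsstr1, hcardS], by simp [hstr1, hcardS]⟩, ?_, ?_⟩ <;>
        exact fun _ Y hY _ => (hY0 Y hY) ▸ hssh
  | @insert x E hx ih =>
    intro S hsupp
    have hsupp0 : supp E (P0 x S) := supp_P0 hsupp
    have hsupp1 : supp E (P1 x S) := supp_P1 hsupp
    set S0 := P0 x S with hS0def
    set S1 := P1 x S with hS1def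
    have hsuppu : supp E (S0 ∪ S1) := by
      intro s hs
      rcases mem_union.1 hs with h | h
      exacts [hsupp0 s h, hsupp1 s h]
    have hsuppi : supp E (S0 ∩ S1) := fun s hs => hsupp0 s (mem_inter.1 hs).1
    have hb : S0.card + S1.card = S.card := P0P1_card x S
    have hui : (S0 ∪ S1).card + (S0 ∩ S1).card = S0.card + S1.card :=
      card_union_add_card_inter S0 S1
    -- counting decompositions
    have hstr : (strR (insert x E) S).card
        = (strR E (S0 ∪ S1)).card
          + (E.powerset.filter (fun Y => shatters S0 Y ∧ shatters S1 Y)).card := by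
      rw [strR, decomp_card hx]
      congr 1
      · rw [strR]
        apply congrArg Finset.card
        apply Finset.filter_congr
        intro Y hY
        have hxY : x ∉ Y := fun h => hx (mem_powerset.1 hY h)
        exact sh_split hxY
      · apply congrArg Finset.card
        apply Finset.filter_congr
        intro Y hY
        have hxY : x ∉ Y := fun h => hx (mem_powerset.1 hY h)
        exact sh_insert hxY
    have hsstr : (sstrR (insert x E) S).card
        = (E.powerset.filter (fun Y => stronglyShatters S0 Y ∨ stronglyShatters S1 Y)).card
          + (sstrR E (S0 ∩ S1)).card := by
      rw [sstrR, decomp_card hx]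
      congr 1
      · apply congrArg Finset.card
        apply Finset.filter_congr
        intro Y hY
        have hxY : x ∉ Y := fun h => hx (mem_powerset.1 hY h)
        exact ssh_split hxY
      · rw [sstrR]
        apply congrArg Finset.card
        apply Finset.filter_congr
        intro Y hY
        have hxY : x ∉ Y := fun h => hx (mem_powerset.1 hY h)
        exact ssh_insert hxY
    -- induction hypotheses
    obtain ⟨⟨ha0, hbb0⟩, hc0, hd0⟩ := ih S0 hsupp0
    obtain ⟨⟨ha1, hbb1⟩, hc1, hd1⟩ := ih S1 hsupp1
    obtain ⟨⟨hau, hbu⟩, hcu, hdu⟩ := ih (S0 ∪ S1) hsuppu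
    obtain ⟨⟨hai, hbi⟩, hci, hdi⟩ := ih (S0 ∩ S1) hsuppi
    -- monotonicity subsets
    have hsub_sh_i : strR E (S0 ∩ S1)
        ⊆ E.powerset.filter (fun Y => shatters S0 Y ∧ shatters S1 Y) := by
      intro Y hY
      rw [strR, mem_filter] at hY
      exact mem_filter.2 ⟨hY.1, sh_mono inter_subset_left hY.2,
        sh_mono inter_subset_right hY.2⟩
    have hsub_ssh_i : sstrR E (S0 ∩ S1)
        ⊆ E.powerset.filter (fun Y => stronglyShatters S0 Y ∧ stronglyShatters S1 Y) := by
      intro Y hY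
      rw [sstrR, mem_filter] at hY
      exact mem_filter.2 ⟨hY.1, ssh_mono inter_subset_left hY.2,
        ssh_mono inter_subset_right hY.2⟩
    have hsub_sh_u : E.powerset.filter (fun Y => shatters S0 Y ∨ shatters S1 Y)
        ⊆ strR E (S0 ∪ S1) := by
      intro Y hY
      rw [mem_filter] at hY
      rw [strR, mem_filter]
      refine ⟨hY.1, ?_⟩
      rcases hY.2 with h | h
      exacts [sh_mono subset_union_left h, sh_mono subset_union_right h]
    have hsub_ssh_u : E.powerset.filter (fun Y => stronglyShatters S0 Y ∨ stronglyShatters S1 Y)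
        ⊆ sstrR E (S0 ∪ S1) := by
      intro Y hY
      rw [mem_filter] at hY
      rw [sstrR, mem_filter]
      refine ⟨hY.1, ?_⟩
      rcases hY.2 with h | h
      exacts [ssh_mono subset_union_left h, ssh_mono subset_union_right h]
    have hmono_sh_i := Finset.card_le_card hsub_sh_i
    have hmono_ssh_i := Finset.card_le_card hsub_ssh_i
    have hmono_sh_u := Finset.card_le_card hsub_sh_u
    have hmono_ssh_u := Finset.card_le_card hsub_ssh_u
    -- inclusion–exclusion
    have hie_sh : (E.powerset.filter (fun Y => shatters S0 Y ∨ shatters S1 Y)).card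
        + (E.powerset.filter (fun Y => shatters S0 Y ∧ shatters S1 Y)).card
        = (strR E S0).card + (strR E S1).card :=
      filter_ie E.powerset (fun Y => shatters S0 Y) (fun Y => shatters S1 Y)
    have hie_ssh : (E.powerset.filter (fun Y => stronglyShatters S0 Y ∨ stronglyShatters S1 Y)).card
        + (E.powerset.filter (fun Y => stronglyShatters S0 Y ∧ stronglyShatters S1 Y)).card
        = (sstrR E S0).card + (sstrR E S1).card :=
      filter_ie E.powerset (fun Y => stronglyShatters S0 Y) (fun Y => stronglyShatters S1 Y)
    refine ⟨⟨by omega, by omega⟩, ?_, ?_⟩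
    · -- |sstr| = |S| case
      intro heq Y hY hshY
      have e1 : (E.powerset.filter
          (fun Y => stronglyShatters S0 Y ∧ stronglyShatters S1 Y)).card
          ≤ (sstrR E (S0 ∩ S1)).card := by omega
      have e2 : (sstrR E (S0 ∪ S1)).card
          ≤ (E.powerset.filter
            (fun Y => stronglyShatters S0 Y ∨ stronglyShatters S1 Y)).card := by omega
      have E1 : sstrR E (S0 ∩ S1)
          = E.powerset.filter (fun Y => stronglyShatters S0 Y ∧ stronglyShatters S1 Y) :=
        Finset.eq_of_subset_of_card_le hsub_ssh_i e1
      have E2 : E.powerset.filter (fun Y => stronglyShatters S0 Y ∨ stronglyShatters S1 Y)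
          = sstrR E (S0 ∪ S1) :=
        Finset.eq_of_subset_of_card_le hsub_ssh_u e2
      have hse0 := hc0 (by omega)
      have hse1 := hc1 (by omega)
      have hseu := hcu (by omega)
      have hY' : Y ⊆ insert x E := mem_powerset.1 hY
      by_cases hxY : x ∈ Y
      · have hxY' : x ∉ Y.erase x := notMem_erase _ _
        have hYE : Y.erase x ⊆ E := by
          intro a ha
          have h1 := Finset.mem_erase.1 ha
          rcases mem_insert.1 (hY' h1.2) with h | h
          · exact absurd h h1.1
          · exact h
        have hins : insert x (Y.erase x) = Y := insert_erase hxY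
        rw [← hins] at hshY ⊢
        obtain ⟨hsh0, hsh1⟩ := (sh_insert hxY').1 hshY
        have hss0 := hse0 _ (mem_powerset.2 hYE) hsh0
        have hss1 := hse1 _ (mem_powerset.2 hYE) hsh1
        have hmem : Y.erase x ∈ sstrR E (S0 ∩ S1) := by
          rw [E1]
          exact mem_filter.2 ⟨mem_powerset.2 hYE, hss0, hss1⟩
        rw [sstrR, mem_filter] at hmem
        exact (ssh_insert hxY').2 hmem.2
      · have hYE : Y ⊆ E := by
          intro a ha
          rcases mem_insert.1 (hY' ha) with h | h
          · exact absurd (h ▸ ha) hxY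
          · exact h
        have hu := (sh_split hxY).1 hshY
        have hsshu := hseu Y (mem_powerset.2 hYE) hu
        have hmem : Y ∈ E.powerset.filter
            (fun Z => stronglyShatters S0 Z ∨ stronglyShatters S1 Z) := by
          rw [E2, sstrR]
          exact mem_filter.2 ⟨mem_powerset.2 hYE, hsshu⟩
        rcases (mem_filter.1 hmem).2 with h | h
        · exact (ssh_split hxY).2 (Or.inl h)
        · exact (ssh_split hxY).2 (Or.inr h)
    · -- |S| = |str| case
      intro heq Y hY hshY
      have e1 : (E.powerset.filter (fun Y => shatters S0 Y ∧ shatters S1 Y)).card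
          ≤ (strR E (S0 ∩ S1)).card := by omega
      have e2 : (strR E (S0 ∪ S1)).card
          ≤ (E.powerset.filter (fun Y => shatters S0 Y ∨ shatters S1 Y)).card := by omega
      have E1 : strR E (S0 ∩ S1)
          = E.powerset.filter (fun Y => shatters S0 Y ∧ shatters S1 Y) :=
        Finset.eq_of_subset_of_card_le hsub_sh_i e1
      have E2 : E.powerset.filter (fun Y => shatters S0 Y ∨ shatters S1 Y)
          = strR E (S0 ∪ S1) :=
        Finset.eq_of_subset_of_card_le hsub_sh_u e2
      have hse0 := hd0 (by omega)
      have hse1 := hd1 (by omega)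
      have hsei := hdi (by omega)
      have hY' : Y ⊆ insert x E := mem_powerset.1 hY
      by_cases hxY : x ∈ Y
      · have hxY' : x ∉ Y.erase x := notMem_erase _ _
        have hYE : Y.erase x ⊆ E := by
          intro a ha
          have h1 := Finset.mem_erase.1 ha
          rcases mem_insert.1 (hY' h1.2) with h | h
          · exact absurd h h1.1
          · exact h
        have hins : insert x (Y.erase x) = Y := insert_erase hxY
        rw [← hins] at hshY ⊢
        obtain ⟨hsh0, hsh1⟩ := (sh_insert hxY').1 hshY
        have hmem : Y.erase x ∈ strR E (S0 ∩ S1) := by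
          rw [E1]
          exact mem_filter.2 ⟨mem_powerset.2 hYE, hsh0, hsh1⟩
        rw [strR, mem_filter] at hmem
        have hsshi := hsei _ (mem_powerset.2 hYE) hmem.2
        exact (ssh_insert hxY').2 hsshi
      · have hYE : Y ⊆ E := by
          intro a ha
          rcases mem_insert.1 (hY' ha) with h | h
          · exact absurd (h ▸ ha) hxY
          · exact h
        have hu := (sh_split hxY).1 hshY
        have hmem : Y ∈ E.powerset.filter (fun Z => shatters S0 Z ∨ shatters S1 Z) := by
          rw [E2, strR]
          exact mem_filter.2 ⟨mem_powerset.2 hYE, hu⟩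
        rcases (mem_filter.1 hmem).2 with h | h
        · exact (ssh_split hxY).2 (Or.inl (hse0 Y (mem_powerset.2 hYE) h))
        · exact (ssh_split hxY).2 (Or.inr (hse1 Y (mem_powerset.2 hYE) h))

theorem stmt5 (S : Finset (α → Bool)) :
    (sstrF S = strF S ↔ (sstrF S).card = S.card) ∧
    ((sstrF S).card = S.card ↔ S.card = (strF S).card) := by
  classical
  have hstrR : strR (univ : Finset α) S = strF S := by
    rw [strR, strF, Finset.powerset_univ]
  have hsstrR : sstrR (univ : Finset α) S = sstrF S := by
    rw [sstrR, sstrF, Finset.powerset_univ]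
  obtain ⟨⟨hle1, hle2⟩, hcond1, hcond2⟩ :=
    main_ind (univ : Finset α) S (fun s _ a ha => absurd (mem_univ a) ha)
  rw [hstrR] at hle2
  rw [hsstrR] at hle1 hcond1
  rw [hstrR] at hcond2
  have hsub : sstrF S ⊆ strF S := by
    intro Y hY
    rw [sstrF, mem_filter] at hY
    rw [strF, mem_filter]
    exact ⟨hY.1, ssh_imp_sh hY.2⟩
  have hmemY : ∀ Y : Finset α, Y ∈ (univ : Finset α).powerset :=
    fun Y => mem_powerset.2 (subset_univ Y)
  have himp1 : (sstrF S).card = S.card → sstrF S = strF S := by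
    intro h
    apply Finset.Subset.antisymm hsub
    intro Y hY
    rw [strF, mem_filter] at hY
    rw [sstrF, mem_filter]
    exact ⟨hY.1, hcond1 h Y (hmemY Y) hY.2⟩
  have himp2 : S.card = (strF S).card → strF S ⊆ sstrF S := by
    intro h Y hY
    rw [strF, mem_filter] at hY
    rw [sstrF, mem_filter]
    exact ⟨hY.1, hcond2 h Y (hmemY Y) hY.2⟩
  refine ⟨⟨?_, himp1⟩, ?_, ?_⟩
  · intro h
    have := congrArg Finset.card h
    omega
  · intro h
    have := congrArg Finset.card (himp1 h)
    omega
  · intro h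
    have heq := Finset.Subset.antisymm hsub (himp2 h)
    have := congrArg Finset.card heq
    omega
end

section
/- A finite set system S ⊆ {0,1}^X is shattering-extremal if and only if its complement {0,1}^X \ S is shattering-extremal. -/
open Finset

variable {α : Type*} [Fintype α] [DecidableEq α]

lemma shatters_iff_not (S : Finset (α → Bool)) (Y : Finset α) :
    shatters S Y ↔ ¬ stronglyShatters Sᶜ Yᶜ := by
  constructor
  · rintro h ⟨g, hg⟩
    obtain ⟨s, hs, hsg⟩ := h g
    have := hg s
    rw [Finset.mem_compl] at this
    apply this
    convert hs using 1
    funext a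
    by_cases ha : a ∈ Y
    · simp [Finset.mem_compl, ha, hsg a ha]
    · simp [Finset.mem_compl, ha]
  · intro h f
    rw [stronglyShatters] at h
    push_neg at h
    obtain ⟨f', hf'⟩ := h f
    rw [Finset.mem_compl, not_not] at hf'
    refine ⟨_, hf', fun a ha => ?_⟩
    simp [Finset.mem_compl, ha]

lemma sshatters_iff_not (S : Finset (α → Bool)) (Y : Finset α) :
    stronglyShatters S Y ↔ ¬ shatters Sᶜ Yᶜ := by
  constructor
  · rintro ⟨g, hg⟩ h
    obtain ⟨s, hs, hsg⟩ := h g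
    rw [Finset.mem_compl] at hs
    apply hs
    have := hg s
    convert this using 1
    funext a
    by_cases ha : a ∈ Y
    · simp [ha]
    · simp [ha, hsg a (Finset.mem_compl.mpr ha)]
  · intro h
    rw [shatters] at h
    push_neg at h
    obtain ⟨g, hg⟩ := h
    refine ⟨g, fun f => ?_⟩
    by_contra hmem
    obtain ⟨a, ha, hne⟩ := hg _ (Finset.mem_compl.mpr hmem)
    rw [Finset.mem_compl] at ha
    simp [ha] at hne

lemma SE_compl_of (S : Finset (α → Bool)) (h : SE S) : SE Sᶜ := by
  intro Y
  rw [show Y = Yᶜᶜ by simp] at *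
  rw [← compl_compl S]
  rw [show (Sᶜᶜᶜ : Finset (α → Bool)) = Sᶜ by simp,
      ← not_iff_not, ← shatters_iff_not, ← sshatters_iff_not]
  exact (h Yᶜ).symm

theorem stmt6 (S : Finset (α → Bool)) : SE S ↔ SE Sᶜ := by
  constructor
  · exact SE_compl_of S
  · intro h
    have := SE_compl_of Sᶜ h
    rwa [compl_compl] at this
end
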